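/- If θ ∈ (2/3, 1/3) ⊂ ℝ/ℤ (the open arc through 0) has 2-angular rotation number p/q under the doubling map, then the set A_1 = {2^{2k+1}θ : 0 ≤ k ≤ q−1} of odd iterates is contained in the arc (1/3, 2/3). -/

import Mathlib

/-- The open arc of the circle `ℝ/ℤ` which is the projection of the real interval `(a,b)`. -/
def Arc (a b : ℝ) : Set (AddCircle (1 : ℝ)) :=
  (fun x : ℝ => ((x : ℝ) : AddCircle (1 : ℝ))) '' Set.Ioo a b

/-- A labelling `L` of points of `ℝ/ℤ` listed in counterclockwise cyclic order. -/
def IsCyclicList {q : ℕ} [NeZero q] (L : Fin q → AddCircle (1 : ℝ)) : Prop :=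
  ∃ x : Fin q → ℝ, StrictMono x ∧ (∀ i, x i < x 0 + 1) ∧
    ∀ i, ((x i : ℝ) : AddCircle (1 : ℝ)) = L i

/-- A `q`-point set `s ⊆ ℝ/ℤ` has angular rotation number `p/q` under `t ↦ d·t`:
listed in cyclic order, the map shifts the points by `p` positions. -/
def SetRotNum (d p q : ℕ) [NeZero q] (s : Set (AddCircle (1 : ℝ))) : Prop :=
  ∃ L : Fin q → AddCircle (1 : ℝ), IsCyclicList L ∧ Set.range L = s ∧
    ∀ i, (d : ℕ) • L i = L (i + (Fin.ofNat q p : Fin q))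

/-- `θ` has 2-angular rotation number `p/q`: the sets `A₀ = {4^k θ : k < q}` and
`A₁ = {2·4^k θ : k < q}` lie in disjoint arcs of the circle, and each has angular
rotation number `p/q` under `t ↦ 4t`. -/
def TwoRotNum (p q : ℕ) [NeZero q] (θ : AddCircle (1 : ℝ)) : Prop :=
  (∃ a b c d : ℝ, b ≤ a + 1 ∧ d ≤ c + 1 ∧
      {t | ∃ k < q, t = (4 ^ k : ℕ) • θ} ⊆ Arc a b ∧
      {t | ∃ k < q, t = (2 * 4 ^ k : ℕ) • θ} ⊆ Arc c d ∧
      Disjoint (Arc a b) (Arc c d)) ∧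
  SetRotNum 4 p q {t | ∃ k < q, t = (4 ^ k : ℕ) • θ} ∧
  SetRotNum 4 p q {t | ∃ k < q, t = (2 * 4 ^ k : ℕ) • θ}


lemma circ_eq_iff {x y : ℝ} : ((x : ℝ) : AddCircle (1:ℝ)) = (y : ℝ) ↔ ∃ n : ℤ, x - y = n := by
  constructor
  · intro h
    obtain ⟨n, hn⟩ := AddSubgroup.mem_zmultiples_iff.mp (QuotientAddGroup.eq_iff_sub_mem.mp h)
    exact ⟨n, by simpa using hn.symm⟩
  · rintro ⟨n, hn⟩
    exact QuotientAddGroup.eq_iff_sub_mem.mpr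
      (AddSubgroup.mem_zmultiples_iff.mpr ⟨n, by simpa using hn.symm⟩)

lemma circ_nsmul (n : ℕ) (x : ℝ) :
    (n : ℕ) • ((x : ℝ) : AddCircle (1:ℝ)) = (((n : ℝ) * x : ℝ) : AddCircle (1:ℝ)) := by
  rw [← nsmul_eq_mul]
  exact (QuotientAddGroup.mk_nsmul _ x n).symm

lemma pow_shift (q : ℕ) (t : ℝ) (hper : ∃ n : ℤ, (4:ℝ)^q * t - t = n) (k : ℕ) :
    ∃ n : ℤ, (4:ℝ)^k * t - (4:ℝ)^(k % q) * t = n := by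
  have hperm : ∀ m : ℕ, ∃ n : ℤ, (4:ℝ) ^ (q * m) * t - t = n := by
    intro m; induction m with
    | zero => exact ⟨0, by simp⟩
    | succ m ih =>
      obtain ⟨n, hn⟩ := ih
      obtain ⟨n0, h0⟩ := hper
      refine ⟨4 ^ (q*m) * n0 + n, ?_⟩
      push_cast
      rw [Nat.mul_succ, pow_add]
      linear_combination (4:ℝ)^(q*m) * h0 + hn
  obtain ⟨z, hz⟩ := hperm (k / q)
  refine ⟨4^(k % q) * z, ?_⟩
  have hsp : (4:ℝ)^k = 4^(k % q) * 4^(q * (k / q)) := by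
    rw [← pow_add]
    congr 1
    rw [Nat.add_comm, Nat.div_add_mod]
  push_cast
  rw [hsp]
  linear_combination (4:ℝ)^(k % q) * hz


lemma main_real (q : ℕ) (hq : 0 < q) (t : ℝ) (ht1 : -(1/3 : ℝ) < t) (ht2 : t < 1/3)
    (a b c d : ℝ) (hba : b ≤ a + 1) (hdc : d ≤ c + 1)
    (u v : ℕ → ℝ)
    (hu : ∀ k, u k ∈ Set.Ioo a b) (hv : ∀ k, v k ∈ Set.Ioo c d)
    (hup : ∀ k, u (k + q) = u k) (hvp : ∀ k, v (k + q) = v k)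
    (hut : ∀ k, ∃ n : ℤ, u k - 4 ^ k * t = n)
    (hvt : ∀ k, ∃ n : ℤ, v k - 2 * 4 ^ k * t = n)
    (hdisj : ∀ x y : ℝ, x ∈ Set.Ioo a b → y ∈ Set.Ioo c d → ∀ n : ℤ, x - y ≠ n) :
    ∀ k, ∃ n : ℤ, v k - n ∈ Set.Ioo (1/3 : ℝ) (2/3) := by
  -- period fact
  have hn0' : ∃ n : ℤ, u 0 - t = n := by
    obtain ⟨n, hn⟩ := hut 0; exact ⟨n, by simpa using hn⟩
  have hper : ∃ n : ℤ, (4:ℝ) ^ q * t - t = n := by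
    obtain ⟨n1, h1⟩ := hut q
    obtain ⟨n0, h0⟩ := hn0'
    have huq : u q = u 0 := by simpa using hup 0
    exact ⟨n0 - n1, by push_cast; rw [huq] at h1; linarith⟩
  have hperm : ∀ m : ℕ, ∃ n : ℤ, (4:ℝ) ^ (q * m) * t - t = n := by
    intro m; induction m with
    | zero => exact ⟨0, by simp⟩
    | succ m ih =>
      obtain ⟨n, hn⟩ := ih
      obtain ⟨n0, h0⟩ := hper
      refine ⟨4 ^ (q*m) * n0 + n, ?_⟩
      push_cast
      rw [Nat.mul_succ, pow_add]
      linear_combination (4:ℝ)^(q*m) * h0 + hn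
  have h3t : ¬ ∃ n : ℤ, (3:ℝ) * t = n := by
    rintro ⟨n, hn⟩
    have hn0 : n = 0 := by
      have h1 : (-1:ℝ) < (n:ℝ) := by rw [← hn]; linarith
      have h2 : ((n:ℝ)) < 1 := by rw [← hn]; linarith
      have h1' : (-1:ℤ) < n := by exact_mod_cast h1
      have h2' : n < 1 := by exact_mod_cast h2
      omega
    have ht0 : t = 0 := by rw [hn0] at hn; push_cast at hn; linarith
    obtain ⟨nu, hnu⟩ := hn0'
    obtain ⟨nv, hnv⟩ := hvt 0
    apply hdisj (u 0) (v 0) (hu 0) (hv 0) (nu - nv)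
    push_cast
    rw [ht0] at hnu hnv
    simp at hnv
    linarith
  have h34 : ∀ k : ℕ, (∃ n : ℤ, (3:ℝ) * 4 ^ k * t = n) → False := by
    rintro k ⟨n, hn⟩
    apply h3t
    obtain ⟨w, hw⟩ := hperm k
    have hk : k ≤ q * k := Nat.le_mul_of_pos_left k hq
    refine ⟨n * 4 ^ (q*k - k) - 3 * w, ?_⟩
    have hsplit : (4:ℝ) ^ (q*k) = 4 ^ k * 4 ^ (q*k - k) := by
      rw [← pow_add]; congr 1; omega
    push_cast
    have h1 : (3:ℝ) * 4^(q*k) * t = n * 4^(q*k-k) := by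
      rw [hsplit]; linear_combination (4:ℝ)^(q*k-k) * hn
    linarith [hw, h1]
  have hE3u : ∀ k, ¬ ∃ n : ℤ, (3:ℝ) * u k = n := by
    rintro k ⟨n, hn⟩
    obtain ⟨m, hm⟩ := hut k
    exact h34 k ⟨n - 3*m, by push_cast; linarith⟩
  have hE3v : ∀ k, ¬ ∃ n : ℤ, (3:ℝ) * v k = n := by
    rintro k ⟨n, hn⟩
    obtain ⟨m, hm⟩ := hvt k
    apply h34 (k+1)
    refine ⟨2*(n - 3*m), ?_⟩
    push_cast
    rw [pow_succ]
    linear_combination 2*hn - 6*hm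
  -- relations
  have hR1 : ∀ k, ∃ n : ℤ, v k - 2 * u k = n := by
    intro k
    obtain ⟨m, hm⟩ := hut k; obtain ⟨m', hm'⟩ := hvt k
    exact ⟨m' - 2*m, by push_cast; linarith⟩
  have hR3u : ∀ k, ∃ n : ℤ, u (k+1) - 4 * u k = n := by
    intro k
    obtain ⟨m, hm⟩ := hut k; obtain ⟨m', hm'⟩ := hut (k+1)
    refine ⟨m' - 4*m, ?_⟩
    have hp : (4:ℝ)^(k+1) = 4 * 4^k := by ring
    push_cast
    rw [hp] at hm'
    linarith
  have hR3v : ∀ k, ∃ n : ℤ, v (k+1) - 4 * v k = n := by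
    intro k
    obtain ⟨m, hm⟩ := hvt k; obtain ⟨m', hm'⟩ := hvt (k+1)
    refine ⟨m' - 4*m, ?_⟩
    have hp : (4:ℝ)^(k+1) = 4 * 4^k := by ring
    push_cast
    rw [hp] at hm'
    linarith
  -- min and max
  have hqne : (Finset.range q).Nonempty := ⟨0, Finset.mem_range.mpr hq⟩
  obtain ⟨kα, hkαm, hkα⟩ := (Finset.range q).exists_min_image u hqne
  obtain ⟨kβ, hkβm, hkβ⟩ := (Finset.range q).exists_max_image u hqne
  obtain ⟨kγ, hkγm, hkγ⟩ := (Finset.range q).exists_min_image v hqne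
  obtain ⟨kδ, hkδm, hkδ⟩ := (Finset.range q).exists_max_image v hqne
  have humul : ∀ m k, u (k + q * m) = u k := by
    intro m
    induction m with
    | zero => intro k; simp
    | succ m ih =>
      intro k
      rw [Nat.mul_succ, ← Nat.add_assoc, hup, ih]
  have hvmul : ∀ m k, v (k + q * m) = v k := by
    intro m
    induction m with
    | zero => intro k; simp
    | succ m ih =>
      intro k
      rw [Nat.mul_succ, ← Nat.add_assoc, hvp, ih]
  have huB : ∀ k, u kα ≤ u k ∧ u k ≤ u kβ := by
    intro k
    have h1 : u k = u (k % q) := by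
      conv_lhs => rw [← Nat.mod_add_div k q]
      rw [humul]
    have hm : k % q ∈ Finset.range q := Finset.mem_range.mpr (Nat.mod_lt k hq)
    rw [h1]
    exact ⟨hkα _ hm, hkβ _ hm⟩
  have hvB : ∀ k, v kγ ≤ v k ∧ v k ≤ v kδ := by
    intro k
    have h1 : v k = v (k % q) := by
      conv_lhs => rw [← Nat.mod_add_div k q]
      rw [hvmul]
    have hm : k % q ∈ Finset.range q := Finset.mem_range.mpr (Nat.mod_lt k hq)
    rw [h1]
    exact ⟨hkγ _ hm, hkδ _ hm⟩
  -- shift of the v family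
  set N : ℤ := ⌈v kγ - u kβ⌉ - 1 with hN
  have hβγ : u kβ < v kγ - N := by
    have := Int.ceil_lt_add_one (v kγ - u kβ)
    push_cast [hN]
    linarith
  have hγβ1 : v kγ - N ≤ u kβ + 1 := by
    have := Int.le_ceil (v kγ - u kβ)
    push_cast [hN]
    linarith
  have hβα1 : u kβ - u kα < 1 := by
    have h1 := (hu kα).1
    have h2 := (hu kβ).2
    linarith
  have hγα1 : v kγ - N < u kα + 1 := by
    by_contra h
    push_neg at h
    apply hdisj (v kγ - N - 1) (v kγ) ?_ (hv kγ) (-(N+1))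
    · push_cast; ring
    · constructor
      · have := (hu kα).1; linarith
      · have := (hu kβ).2; linarith
  have hδα1 : v kδ - N < u kα + 1 := by
    by_contra h
    push_neg at h
    apply hdisj (u kα) (u kα + 1 + N) (hu kα) ?_ (-(1+N))
    · push_cast; ring
    · constructor
      · have := (hv kγ).1; linarith
      · have := (hv kδ).2; linarith
  have hδγ : v kγ ≤ v kδ := (hvB kδ).1
  -- the four gap integers
  obtain ⟨m1, hm1⟩ := hR3u kβ
  obtain ⟨m2, hm2⟩ := hR3v kγ
  obtain ⟨m3, hm3⟩ := hR3v kδ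
  obtain ⟨m4, hm4⟩ := hR3u kα
  set e1 : ℤ := -m1 with he1d
  set e2 : ℤ := -m2 - 3*N with he2d
  set e3 : ℤ := -m3 - 3*N with he3d
  set e4 : ℤ := -m4 with he4d
  have he1 : (e1:ℝ) = 4 * u kβ - u (kβ+1) := by push_cast [he1d]; linarith
  have he2 : (e2:ℝ) = 4 * (v kγ - N) - (v (kγ+1) - N) := by push_cast [he2d]; linarith
  have he3 : (e3:ℝ) = 4 * (v kδ - N) - (v (kδ+1) - N) := by push_cast [he3d]; linarith
  have he4 : (e4:ℝ) = 4 * u kα - u (kα+1) := by push_cast [he4d]; linarith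
  have hf1 : 3 * u kβ < (e1:ℝ) := by
    have hle : 3 * u kβ ≤ (e1:ℝ) := by
      have := (huB (kβ+1)).2; rw [he1]; linarith
    rcases hle.lt_or_eq with h | h
    · exact h
    · exact absurd ⟨e1, h⟩ (hE3u kβ)
  have hf2 : (e2:ℝ) < 3 * (v kγ - N) := by
    have hle : (e2:ℝ) ≤ 3 * (v kγ - N) := by
      have := (hvB (kγ+1)).1; rw [he2]; linarith
    rcases hle.lt_or_eq with h | h
    · exact h
    · refine absurd ⟨e2 + 3*N, ?_⟩ (hE3v kγ)
      push_cast
      linarith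
  have hf3 : 3 * (v kδ - N) < (e3:ℝ) := by
    have hle : 3 * (v kδ - N) ≤ (e3:ℝ) := by
      have := (hvB (kδ+1)).2; rw [he3]; linarith
    rcases hle.lt_or_eq with h | h
    · exact h
    · refine absurd ⟨e3 + 3*N, ?_⟩ (hE3v kδ)
      push_cast
      linarith
  have hf4 : (e4:ℝ) < 3 * u kα := by
    have hle : (e4:ℝ) ≤ 3 * u kα := by
      have := (huB (kα+1)).1; rw [he4]; linarith
    rcases hle.lt_or_eq with h | h
    · exact h
    · exact absurd ⟨e4, h.symm⟩ (hE3u kα)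
  have hf12 : e1 ≤ e2 := by
    have hr : (-1:ℝ) < (e2:ℝ) - e1 := by
      rw [he1, he2]
      have h1 := (hvB (kγ+1)).2
      have h2 := (huB (kβ+1)).1
      linarith
    have : (-1:ℤ) < e2 - e1 := by exact_mod_cast hr
    omega
  have hf34 : e3 ≤ e4 + 3 := by
    have hr : (e3:ℝ) - e4 < 4 := by
      rw [he3, he4]
      have h1 := (hvB (kδ+1)).1
      have h2 := (huB (kα+1)).2
      linarith
    have : e3 - e4 < 4 := by exact_mod_cast hr
    omega
  have hf34r : (e3:ℝ) ≤ (e4:ℝ) + 3 := by exact_mod_cast hf34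
  have hf12r : (e1:ℝ) ≤ (e2:ℝ) := by exact_mod_cast hf12
  -- uniform bounds
  have hub : ∀ k, 3 * u k < (e1:ℝ) := by
    intro k; have := (huB k).2; linarith
  have hlb : ∀ k, (e3:ℝ) - 3 < 3 * u k := by
    intro k; have := (huB k).1; linarith
  have hvlb : ∀ k, (e1:ℝ) < 3 * (v k - N) := by
    intro k; have := (hvB k).1; linarith
  have hvub : ∀ k, 3 * (v k - N) < (e3:ℝ) := by
    intro k; have := (hvB k).2; linarith
  -- integer n0 and the key bounds for t
  obtain ⟨n0, hn0⟩ := hn0'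
  have h0a : 3*t + 3*(n0:ℝ) < (e1:ℝ) := by
    have := hub 0; linarith
  have h0b : (e3:ℝ) < 3*t + 3*(n0:ℝ) + 3 := by
    have := hlb 0; linarith
  have hA0 : 0 ≤ e1 - 3*n0 := by
    have hr : (-1:ℝ) < (e1:ℝ) - 3*n0 := by linarith
    have : (-1:ℤ) < e1 - 3*n0 := by exact_mod_cast hr
    omega
  have hB3 : e3 - 3*n0 ≤ 3 := by
    have hr : (e3:ℝ) - 3*n0 < 4 := by linarith
    have : e3 - 3*n0 < 4 := by exact_mod_cast hr
    omega
  have hAB1 : e1 + 1 ≤ e3 := by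
    have hr : (e1:ℝ) < (e3:ℝ) := by linarith [hf2, hf3, hδγ]
    have : e1 < e3 := by exact_mod_cast hr
    omega
  have hAB2 : e3 ≤ e1 + 2 := by
    have hαβ : u kα ≤ u kβ := (huB kβ).1
    have hr : (e3:ℝ) < (e1:ℝ) + 3 := by linarith
    have : e3 < e1 + 3 := by exact_mod_cast hr
    omega
  -- relation at index 0
  obtain ⟨m0, hm0⟩ := hR1 0
  -- final case analysis
  intro k
  obtain ⟨m, hm⟩ := hR1 k
  have hM : ((m - N + n0 : ℤ):ℝ) = (v k - N - n0) - 2*(u k - n0) := by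
    push_cast; linarith
  have hM0 : ((m0 - N + n0 : ℤ):ℝ) = (v 0 - N - n0) - 2*t := by
    push_cast; linarith
  have hcases : (e1 = 3*n0 ∧ e3 = 3*n0 + 1) ∨ (e1 = 3*n0 ∧ e3 = 3*n0 + 2) ∨
      (e1 = 3*n0 + 1 ∧ e3 = 3*n0 + 2) ∨ (e1 = 3*n0 + 1 ∧ e3 = 3*n0 + 3) ∨
      (e1 = 3*n0 + 2 ∧ e3 = 3*n0 + 3) := by omega
  have hV01 := hvlb 0
  have hV02 := hvub 0
  have hVk1 := hvlb k
  have hVk2 := hvub k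
  have hUk1 := hub k
  have hUk2 := hlb k
  rcases hcases with ⟨hA, hB⟩ | ⟨hA, hB⟩ | ⟨hA, hB⟩ | ⟨hA, hB⟩ | ⟨hA, hB⟩
  -- case (0,1): contradiction
  · exfalso
    have ra : (e1:ℝ) = 3*(n0:ℝ) := by exact_mod_cast hA
    have rb : (e3:ℝ) = 3*(n0:ℝ) + 1 := by exact_mod_cast hB
    have c1 : (0:ℝ) < ((m0 - N + n0 : ℤ):ℝ) := by rw [hM0]; linarith
    have c2 : ((m0 - N + n0 : ℤ):ℝ) < 1 := by rw [hM0]; linarith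
    have c1' : (0:ℤ) < m0 - N + n0 := by exact_mod_cast c1
    have c2' : m0 - N + n0 < 1 := by exact_mod_cast c2
    omega
  -- case (0,2)
  · have ra : (e1:ℝ) = 3*(n0:ℝ) := by exact_mod_cast hA
    have rb : (e3:ℝ) = 3*(n0:ℝ) + 2 := by exact_mod_cast hB
    have c1 : (0:ℝ) < 3*((m - N + n0 : ℤ):ℝ) := by rw [hM]; linarith
    have c2 : 3*((m - N + n0 : ℤ):ℝ) < 4 := by rw [hM]; linarith
    have c1' : (0:ℤ) < 3*(m - N + n0) := by exact_mod_cast c1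
    have c2' : 3*(m - N + n0) < 4 := by exact_mod_cast c2
    have hMeq : m - N + n0 = 1 := by omega
    have hMr : (v k - N - n0) - 2*(u k - n0) = 1 := by
      rw [← hM, hMeq]; norm_num
    refine ⟨N + n0, ?_, ?_⟩
    · push_cast; linarith
    · push_cast; linarith
  -- case (1,2)
  · have ra : (e1:ℝ) = 3*(n0:ℝ) + 1 := by exact_mod_cast hA
    have rb : (e3:ℝ) = 3*(n0:ℝ) + 2 := by exact_mod_cast hB
    refine ⟨N + n0, ?_, ?_⟩
    · push_cast; linarith
    · push_cast; linarith
  -- case (1,3)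
  · have ra : (e1:ℝ) = 3*(n0:ℝ) + 1 := by exact_mod_cast hA
    have rb : (e3:ℝ) = 3*(n0:ℝ) + 3 := by exact_mod_cast hB
    have c1 : (-1:ℝ) < 3*((m - N + n0 : ℤ):ℝ) := by rw [hM]; linarith
    have c2 : 3*((m - N + n0 : ℤ):ℝ) < 3 := by rw [hM]; linarith
    have c1' : (-1:ℤ) < 3*(m - N + n0) := by exact_mod_cast c1
    have c2' : 3*(m - N + n0) < 3 := by exact_mod_cast c2
    have hMeq : m - N + n0 = 0 := by omega
    have hMr : (v k - N - n0) - 2*(u k - n0) = 0 := by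
      rw [← hM, hMeq]; norm_num
    refine ⟨N + n0, ?_, ?_⟩
    · push_cast; linarith
    · push_cast; linarith
  -- case (2,3): contradiction
  · exfalso
    have ra : (e1:ℝ) = 3*(n0:ℝ) + 2 := by exact_mod_cast hA
    have rb : (e3:ℝ) = 3*(n0:ℝ) + 3 := by exact_mod_cast hB
    have c1 : (0:ℝ) < ((m0 - N + n0 : ℤ):ℝ) := by rw [hM0]; linarith
    have c2 : ((m0 - N + n0 : ℤ):ℝ) < 1 := by rw [hM0]; linarith
    have c1' : (0:ℤ) < m0 - N + n0 := by exact_mod_cast c1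
    have c2' : m0 - N + n0 < 1 := by exact_mod_cast c2
    omega

/-- If `θ` lies in the open arc `(2/3, 1/3)` through `0` and has 2-angular rotation
number `p/q` under the doubling map, then the set `A₁ = {2·4^k θ : 0 ≤ k ≤ q−1}` of odd
iterates is contained in the arc `(1/3, 2/3)`. -/
theorem stmt7 (p q : ℕ) [NeZero q] (θ : AddCircle (1 : ℝ))
    (hθarc : θ ∈ Arc (-(1 / 3) : ℝ) (1 / 3)) (hθ : TwoRotNum p q θ) :
    {t | ∃ k < q, t = (2 * 4 ^ k : ℕ) • θ} ⊆ Arc (1 / 3 : ℝ) (2 / 3) := by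
  have hq : 0 < q := Nat.pos_of_ne_zero (NeZero.ne q)
  obtain ⟨⟨a, b, c, d, hba, hdc, hsub0, hsub1, hdisjArc⟩, hrot0, -⟩ := hθ
  obtain ⟨t, htmem, htθ0⟩ := hθarc
  have htθ : ((t : ℝ) : AddCircle (1:ℝ)) = θ := htθ0
  -- 4^q • θ = θ
  obtain ⟨L, -, hLrange, hLshift⟩ := hrot0
  have hθA0 : θ ∈ {s | ∃ k < q, s = (4 ^ k : ℕ) • θ} := ⟨0, hq, by simp⟩
  have hθA0' : θ ∈ Set.range L := by rw [hLrange]; exact hθA0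
  obtain ⟨i0, hi0⟩ := hθA0'
  have hiter : ∀ (n : ℕ) (i : Fin q), (4^n : ℕ) • L i = L (i + n • (Fin.ofNat q p : Fin q)) := by
    intro n
    induction n with
    | zero => intro i; simp
    | succ n ih =>
      intro i
      have h4 : (4^(n+1) : ℕ) = 4 * 4^n := by ring
      rw [h4, mul_nsmul, hLshift, ih, succ_nsmul]
      congr 1
      abel
  have hfix : (4^q : ℕ) • θ = θ := by
    conv_lhs => rw [← hi0, hiter q i0]
    have hz : q • (Fin.ofNat q p : Fin q) = 0 := by
      have h := card_nsmul_eq_zero (x := (Fin.ofNat q p : Fin q))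
      rw [Fintype.card_fin] at h
      exact h
    rw [hz, add_zero, hi0]
  -- lifts
  have hl0 : ∀ i : Fin q, ∃ x, x ∈ Set.Ioo a b ∧
      ((x : ℝ) : AddCircle (1:ℝ)) = (4^(i:ℕ) : ℕ) • θ := fun i => hsub0 ⟨(i:ℕ), i.isLt, rfl⟩
  choose w hw1 hw2 using hl0
  have hl1 : ∀ i : Fin q, ∃ x, x ∈ Set.Ioo c d ∧
      ((x : ℝ) : AddCircle (1:ℝ)) = (2 * 4^(i:ℕ) : ℕ) • θ := fun i => hsub1 ⟨(i:ℕ), i.isLt, rfl⟩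
  choose w' hw1' hw2' using hl1
  set u : ℕ → ℝ := fun k => w ⟨k % q, Nat.mod_lt k hq⟩ with hu_def
  set v : ℕ → ℝ := fun k => w' ⟨k % q, Nat.mod_lt k hq⟩ with hv_def
  have hu : ∀ k, u k ∈ Set.Ioo a b := fun k => hw1 _
  have hv : ∀ k, v k ∈ Set.Ioo c d := fun k => hw1' _
  have hup : ∀ k, u (k + q) = u k := by
    intro k
    simp only [hu_def]
    congr 1
    exact Fin.ext (Nat.add_mod_right k q)
  have hvp : ∀ k, v (k + q) = v k := by
    intro k
    simp only [hv_def]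
    congr 1
    exact Fin.ext (Nat.add_mod_right k q)
  -- mod-level integer relations
  have humod : ∀ k, ∃ n : ℤ, u k - (4:ℝ)^(k % q) * t = n := by
    intro k
    apply circ_eq_iff.mp
    rw [hw2 _, ← htθ, circ_nsmul]
    push_cast
    rfl
  have hvmod : ∀ k, ∃ n : ℤ, v k - 2 * (4:ℝ)^(k % q) * t = n := by
    intro k
    apply circ_eq_iff.mp
    rw [hw2' _, ← htθ, circ_nsmul]
    push_cast
    norm_num [mul_assoc]
  have hper : ∃ n : ℤ, (4:ℝ)^q * t - t = n := by
    apply circ_eq_iff.mp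
    have h := circ_nsmul (4^q) t
    push_cast at h
    rw [← h, htθ, hfix]
  have hut : ∀ k, ∃ n : ℤ, u k - 4 ^ k * t = n := by
    intro k
    obtain ⟨n1, h1⟩ := humod k
    obtain ⟨n2, h2⟩ := pow_shift q t hper k
    exact ⟨n1 - n2, by push_cast; linarith⟩
  have hvt : ∀ k, ∃ n : ℤ, v k - 2 * 4 ^ k * t = n := by
    intro k
    obtain ⟨n1, h1⟩ := hvmod k
    obtain ⟨n2, h2⟩ := pow_shift q t hper k
    exact ⟨n1 - 2*n2, by push_cast; linarith⟩
  have hdisj : ∀ x y : ℝ, x ∈ Set.Ioo a b → y ∈ Set.Ioo c d → ∀ n : ℤ, x - y ≠ n := by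
    intro x y hx hy n he
    have hxy : ((x : ℝ) : AddCircle (1:ℝ)) = (y : ℝ) := circ_eq_iff.mpr ⟨n, he⟩
    exact Set.disjoint_left.mp hdisjArc ⟨x, hx, rfl⟩ ⟨y, hy, hxy.symm⟩
  have hmain := main_real q hq t htmem.1 htmem.2 a b c d hba hdc u v hu hv hup hvp hut hvt hdisj
  rintro s ⟨k, hk, rfl⟩
  obtain ⟨n, hn⟩ := hmain k
  refine ⟨v k - n, hn, ?_⟩
  show ((v k - (n:ℝ) : ℝ) : AddCircle (1:ℝ)) = (2 * 4 ^ k : ℕ) • θ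
  have h1 : ((v k - (n:ℝ) : ℝ) : AddCircle (1:ℝ)) = ((v k : ℝ) : AddCircle (1:ℝ)) :=
    circ_eq_iff.mpr ⟨-n, by push_cast; ring⟩
  rw [h1]
  rw [show v k = w' ⟨k % q, Nat.mod_lt k hq⟩ from rfl]
  simp only [Nat.mod_eq_of_lt hk]
  exact hw2' _
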